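/- arXiv:1211.1648 — 3 statements merged into one kernel-verified Lean document; each statement's English description precedes it below -/
import Mathlib

section
/- If U is basepoint free, then every associated prime of the R-module R/I_U is one of the following: ⟨s,t⟩; ⟨u,v⟩; ⟨s,t,au+bv⟩ for some (a,b) ∈ k² \ {(0,0)}; ⟨u,v,as+bt⟩ for some (a,b) ∈ k² \ {(0,0)}; or the maximal ideal ⟨s,t,u,v⟩. -/
open MvPolynomial

noncomputable section

def biDeg (k : Type*) [CommRing k] (m n : ℕ) : Submodule k (MvPolynomial (Fin 4) k) where
  carrier := {p | ∀ d ∈ p.support, d 0 + d 1 = m ∧ d 2 + d 3 = n}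
  zero_mem' := by simp
  add_mem' := by
    intro p q hp hq d hd
    rcases Finset.mem_union.mp (MvPolynomial.support_add hd) with h | h
    · exact hp d h
    · exact hq d h
  smul_mem' := by
    intro c p hp d hd
    exact hp d (MvPolynomial.support_smul hd)

def syzMap {k : Type*} [CommRing k] (p : Fin 4 → MvPolynomial (Fin 4) k) :
    (Fin 4 → MvPolynomial (Fin 4) k) →ₗ[k] MvPolynomial (Fin 4) k where
  toFun ℓ := ∑ i, ℓ i * p i
  map_add' ℓ ℓ' := by simp [add_mul, Finset.sum_add_distrib]
  map_smul' c ℓ := by simp [smul_mul_assoc, Finset.smul_sum]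

def Syz {k : Type*} [CommRing k] (p : Fin 4 → MvPolynomial (Fin 4) k) (a b : ℕ) :
    Submodule k (Fin 4 → MvPolynomial (Fin 4) k) :=
  (Submodule.pi Set.univ fun _ => biDeg k a b) ⊓ LinearMap.ker (syzMap p)


namespace Stmt7Aux

variable {k : Type*} [Field k]

abbrev R4 (k : Type*) [CommRing k] := MvPolynomial (Fin 4) k

/-- weight vector counting degree in variables 0,1 -/
def w1 : Fin 4 → ℕ := ![1, 1, 0, 0]
/-- weight vector counting degree in variables 2,3 -/
def w2 : Fin 4 → ℕ := ![0, 0, 1, 1]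

lemma weight_w1 (d : Fin 4 →₀ ℕ) : Finsupp.weight w1 d = d 0 + d 1 := by
  have : Finsupp.weight w1 d = ∑ i : Fin 4, d i • w1 i := by
    rw [Finsupp.weight_apply, Finsupp.sum_fintype]
    intro i; simp
  rw [this, Fin.sum_univ_four]; simp [w1]

lemma weight_w2 (d : Fin 4 →₀ ℕ) : Finsupp.weight w2 d = d 2 + d 3 := by
  have : Finsupp.weight w2 d = ∑ i : Fin 4, d i • w2 i := by
    rw [Finsupp.weight_apply, Finsupp.sum_fintype]
    intro i; simp
  rw [this, Fin.sum_univ_four]; simp [w2]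

/-- generic substitution congruence lemma -/
lemma sub_aeval_mem (J : Ideal (R4 k)) (σ : Fin 4 → R4 k) (hσ : ∀ i, X i - σ i ∈ J)
    (f : R4 k) : f - aeval σ f ∈ J := by
  induction f using MvPolynomial.induction_on with
  | C a => simp
  | add p q hp hq =>
      have : p + q - aeval σ (p + q) = (p - aeval σ p) + (q - aeval σ q) := by
        rw [map_add]; ring
      rw [this]; exact add_mem hp hq
  | mul_X p i hp =>
      have : p * X i - aeval σ (p * X i) =
          (p - aeval σ p) * X i + aeval σ p * (X i - σ i) := by
        rw [map_mul, aeval_X]; ring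
      rw [this]
      exact add_mem (Ideal.mul_mem_right _ _ hp) (Ideal.mul_mem_left _ _ (hσ i))

/-- components of elements of a homogeneously generated ideal stay in the ideal -/
lemma span_comp_mem (w : Fin 4 → ℕ) (S : Set (R4 k))
    (hS : ∀ g ∈ S, ∃ m, IsWeightedHomogeneous w g m)
    {f : R4 k} (hf : f ∈ Ideal.span S) (n : ℕ) :
    weightedHomogeneousComponent w n f ∈ Ideal.span S := by
  letI : GradedAlgebra (weightedHomogeneousSubmodule k w) := weightedGradedAlgebra k w
  have hhom : (Ideal.span S).IsHomogeneous (weightedHomogeneousSubmodule k w) := by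
    apply Ideal.homogeneous_span
    intro x hx
    obtain ⟨m, hm⟩ := hS x hx
    exact ⟨m, (mem_weightedHomogeneousSubmodule _ _ _ _).2 hm⟩
  have := hhom n hf
  rwa [show ((DirectSum.decompose (weightedHomogeneousSubmodule k w) f n : R4 k)) =
    weightedHomogeneousComponent w n f from MvPolynomial.decompose'_apply k w f n] at this


lemma support_sub_comp (w : Fin 4 → ℕ) (x : R4 k) (m : ℕ) :
    ∀ d ∈ (x - weightedHomogeneousComponent w m x).support,
      d ∈ x.support ∧ Finsupp.weight w d ≠ m := by
  classical
  intro d hd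
  rw [mem_support_iff, MvPolynomial.coeff_sub, coeff_weightedHomogeneousComponent] at hd
  by_cases h : Finsupp.weight w d = m
  · simp [h] at hd
  · rw [if_neg h, sub_zero] at hd
    exact ⟨mem_support_iff.mpr hd, h⟩

lemma comp_mul_eq_zero (w : Fin 4 → ℕ) (p q : R4 k) (n : ℕ)
    (h : ∀ a ∈ p.support, ∀ b ∈ q.support, Finsupp.weight w a + Finsupp.weight w b ≠ n) :
    weightedHomogeneousComponent w n (p * q) = 0 := by
  classical
  apply weightedHomogeneousComponent_eq_zero'
  intro d hd
  obtain ⟨a, ha, b, hb, rfl⟩ := Finset.mem_add.mp (MvPolynomial.support_mul p q hd)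
  rw [map_add]
  exact h a ha b hb

lemma key_top_pow (w : Fin 4 → ℕ) (I : Ideal (R4 k))
    (hI : ∀ f ∈ I, ∀ n, weightedHomogeneousComponent w n f ∈ I)
    (f : R4 k) (n : ℕ) (hn : ∀ d ∈ f.support, Finsupp.weight w d ≤ n) :
    ∀ c : ℕ, ∀ x : R4 k, (x.support.image (Finsupp.weight w)).card ≤ c →
      f * x ∈ I → (weightedHomogeneousComponent w n f) ^ c * x ∈ I := by
  intro c
  induction c with
  | zero =>
      intro x hx _
      have : x = 0 := by
        rw [← MvPolynomial.support_eq_empty, ← Finset.image_eq_empty (f := Finsupp.weight w)]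
        exact Finset.card_eq_zero.mp (Nat.le_zero.mp hx)
      simp [this]
  | succ c ih =>
      intro x hx hfx
      by_cases hx0 : x = 0
      · simp [hx0]
      set fn := weightedHomogeneousComponent w n f with hfn_def
      have hfn : IsWeightedHomogeneous w fn n :=
        weightedHomogeneousComponent_isWeightedHomogeneous n f
      set D := x.support.image (Finsupp.weight w) with hD_def
      have hD : D.Nonempty := Finset.Nonempty.image (MvPolynomial.support_nonempty.2 hx0) _
      set m := D.max' hD with hm_def
      set xm := weightedHomogeneousComponent w m x with hxm_def
      have hxm : IsWeightedHomogeneous w xm m :=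
        weightedHomogeneousComponent_isWeightedHomogeneous m x
      set x' := x - xm with hx'_def
      have hxle : ∀ d ∈ x.support, Finsupp.weight w d ≤ m := fun d hd =>
        Finset.le_max' _ _ (Finset.mem_image_of_mem _ hd)
      have hx'lt : ∀ d ∈ x'.support, Finsupp.weight w d < m := by
        intro d hd
        obtain ⟨h1, h2⟩ := support_sub_comp w x m d hd
        exact lt_of_le_of_ne (hxle d h1) h2
      have hf'lt : ∀ d ∈ (f - fn).support, Finsupp.weight w d < n := by
        intro d hd
        obtain ⟨h1, h2⟩ := support_sub_comp w f n d hd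
        exact lt_of_le_of_ne (hn d h1) h2
      have hsplit : f * x = fn * xm + ((f - fn) * x + fn * x') := by
        rw [hx'_def]; ring
      have hA : weightedHomogeneousComponent w (n + m) (f * x) = fn * xm := by
        rw [hsplit, map_add, map_add]
        rw [comp_mul_eq_zero w (f - fn) x (n + m) (by
          intro a ha b hb
          have := hf'lt a ha
          have := hxle b hb
          omega)]
        rw [comp_mul_eq_zero w fn x' (n + m) (by
          intro a ha b hb
          have := hfn (mem_support_iff.mp ha)
          have := hx'lt b hb
          omega)]
        rw [(hfn.mul hxm).weightedHomogeneousComponent_same]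
        ring
      have h1 : fn * xm ∈ I := hA ▸ hI _ hfx (n + m)
      have h2 : f * (fn * x') ∈ I := by
        have heq : f * (fn * x') = fn * (f * x) - f * (fn * xm) := by
          rw [hx'_def]; ring
        rw [heq]
        exact sub_mem (Ideal.mul_mem_left _ _ hfx) (Ideal.mul_mem_left _ _ h1)
      have hcard : ((fn * x').support.image (Finsupp.weight w)).card ≤ c := by
        have hsub : (fn * x').support.image (Finsupp.weight w) ⊆
            (D.erase m).image (n + ·) := by
          intro e he
          obtain ⟨d, hd, rfl⟩ := Finset.mem_image.mp he
          obtain ⟨a, ha, b, hb, rfl⟩ := Finset.mem_add.mp (MvPolynomial.support_mul fn x' hd)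
          rw [map_add]
          apply Finset.mem_image.mpr
          refine ⟨Finsupp.weight w b, ?_, by rw [hfn (mem_support_iff.mp ha)]⟩
          obtain ⟨hbx, hbm⟩ := support_sub_comp w x m b hb
          exact Finset.mem_erase.mpr ⟨hbm, Finset.mem_image_of_mem _ hbx⟩
        calc ((fn * x').support.image (Finsupp.weight w)).card
            ≤ ((D.erase m).image (n + ·)).card := Finset.card_le_card hsub
          _ ≤ (D.erase m).card := Finset.card_image_le
          _ = D.card - 1 := Finset.card_erase_of_mem (D.max'_mem hD)
          _ ≤ c := by
              have : 1 ≤ D.card := Finset.card_pos.mpr hD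
              omega
      have h3 := ih (fn * x') hcard h2
      have hxsum : x' + xm = x := sub_add_cancel x xm
      have hfinal : fn ^ (c + 1) * x = fn ^ c * (fn * x') + fn ^ (c + 1) * xm := by
        rw [← hxsum]; ring
      rw [hfinal]
      refine add_mem h3 ?_
      have heq2 : fn ^ (c + 1) * xm = fn ^ c * (fn * xm) := by ring
      rw [heq2]
      exact Ideal.mul_mem_left _ _ h1

lemma prime_comp_mem (w : Fin 4 → ℕ) (I P : Ideal (R4 k)) (hP : P.IsPrime)
    (hI : ∀ f ∈ I, ∀ n, weightedHomogeneousComponent w n f ∈ I)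
    (x : R4 k) (hPx : ∀ r, r ∈ P ↔ r * x ∈ I) :
    ∀ f ∈ P, ∀ n, weightedHomogeneousComponent w n f ∈ P := by
  suffices H : ∀ c : ℕ, ∀ f, (f.support.image (Finsupp.weight w)).card ≤ c → f ∈ P →
      ∀ n, weightedHomogeneousComponent w n f ∈ P by
    intro f hf n; exact H _ f le_rfl hf n
  intro c
  induction c with
  | zero =>
      intro f hc _ n
      have : f = 0 := by
        rw [← MvPolynomial.support_eq_empty, ← Finset.image_eq_empty (f := Finsupp.weight w)]
        exact Finset.card_eq_zero.mp (Nat.le_zero.mp hc)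
      simp [this]
  | succ c ih =>
      intro f hcard hfP n
      by_cases hf0 : f = 0
      · simp [hf0]
      set D := f.support.image (Finsupp.weight w) with hD_def
      have hD : D.Nonempty := Finset.Nonempty.image (MvPolynomial.support_nonempty.2 hf0) _
      set m := D.max' hD with hm_def
      set fm := weightedHomogeneousComponent w m f with hfm_def
      have hle : ∀ d ∈ f.support, Finsupp.weight w d ≤ m := fun d hd =>
        Finset.le_max' _ _ (Finset.mem_image_of_mem _ hd)
      have hfm_mem : fm ∈ P := by
        have h1 : f * x ∈ I := (hPx f).1 hfP
        have h2 := key_top_pow w I hI f m hle (x.support.image (Finsupp.weight w)).card x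
          le_rfl h1
        exact hP.mem_of_pow_mem _ ((hPx _).2 h2)
      have hrest : f - fm ∈ P := sub_mem hfP hfm_mem
      have hrcard : ((f - fm).support.image (Finsupp.weight w)).card ≤ c := by
        have hsub : (f - fm).support.image (Finsupp.weight w) ⊆ D.erase m := by
          intro e he
          obtain ⟨d, hd, rfl⟩ := Finset.mem_image.mp he
          obtain ⟨h1, h2⟩ := support_sub_comp w f m d hd
          exact Finset.mem_erase.mpr ⟨h2, Finset.mem_image_of_mem _ h1⟩
        calc ((f - fm).support.image (Finsupp.weight w)).card
            ≤ (D.erase m).card := Finset.card_le_card hsub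
          _ = D.card - 1 := Finset.card_erase_of_mem (D.max'_mem hD)
          _ ≤ c := by
              have : 1 ≤ D.card := Finset.card_pos.mpr hD
              omega
      have h4 := ih (f - fm) hrcard hrest n
      have hsplit : weightedHomogeneousComponent w n f =
          weightedHomogeneousComponent w n (f - fm) + weightedHomogeneousComponent w n fm := by
        rw [← map_add]
        congr 1
        ring
      rw [hsplit]
      refine add_mem h4 ?_
      classical
      rw [weightedHomogeneousComponent_of_mem (weightedHomogeneousComponent_mem w f m)]
      split
      · exact hfm_mem
      · exact P.zero_mem



/-- monomial-exponent predicates closed under ring ops -/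
def GoodSupp (Q : (Fin 4 →₀ ℕ) → Prop) (p : R4 k) : Prop := ∀ d ∈ p.support, Q d

lemma goodSupp_zero {Q} (h0 : Q 0) : GoodSupp Q (0 : R4 k) := by
  intro d hd; simp at hd

lemma goodSupp_C {Q} (h0 : Q 0) (c : k) : GoodSupp Q (C c : R4 k) := by
  intro d hd
  rw [mem_support_iff, coeff_C] at hd
  by_cases h : (0 : Fin 4 →₀ ℕ) = d
  · rw [← h]; exact h0
  · rw [if_neg h] at hd; exact absurd rfl hd

lemma goodSupp_add {Q} {p q : R4 k} (hp : GoodSupp Q p) (hq : GoodSupp Q q) :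
    GoodSupp Q (p + q) := by
  intro d hd
  rcases Finset.mem_union.mp (MvPolynomial.support_add hd) with h | h
  · exact hp d h
  · exact hq d h

lemma goodSupp_mul {Q : (Fin 4 →₀ ℕ) → Prop}
    (hQ : ∀ a b, Q a → Q b → Q (a + b)) {p q : R4 k}
    (hp : GoodSupp Q p) (hq : GoodSupp Q q) : GoodSupp Q (p * q) := by
  classical
  intro d hd
  obtain ⟨a, ha, b, hb, rfl⟩ := Finset.mem_add.mp (MvPolynomial.support_mul p q hd)
  exact hQ a b (hp a ha) (hq b hb)

lemma goodSupp_aeval {Q : (Fin 4 →₀ ℕ) → Prop} (h0 : Q 0)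
    (hQ : ∀ a b, Q a → Q b → Q (a + b)) (σ : Fin 4 → R4 k)
    (hσ : ∀ i, GoodSupp Q (σ i)) (f : R4 k) : GoodSupp Q (aeval σ f : R4 k) := by
  induction f using MvPolynomial.induction_on with
  | C a => rw [aeval_C]; exact goodSupp_C h0 a
  | add p q hp hq => rw [map_add]; exact goodSupp_add hp hq
  | mul_X p i hp => rw [map_mul, aeval_X]; exact goodSupp_mul hQ hp (hσ i)

lemma goodSupp_comp {Q : (Fin 4 →₀ ℕ) → Prop} {p : R4 k} (hp : GoodSupp Q p)
    (w : Fin 4 → ℕ) (n : ℕ) : GoodSupp Q (weightedHomogeneousComponent w n p) := by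
  classical
  intro d hd
  rw [mem_support_iff, coeff_weightedHomogeneousComponent] at hd
  split at hd
  · exact hp d (mem_support_iff.mpr hd)
  · exact absurd rfl hd

lemma eq_monomial_of_supp {p : R4 k} {d₀ : Fin 4 →₀ ℕ}
    (h : ∀ d ∈ p.support, d = d₀) : p = monomial d₀ (coeff d₀ p) := by
  classical
  ext d
  rw [coeff_monomial]
  by_cases hd : d₀ = d
  · subst hd; rw [if_pos rfl]
  · rw [if_neg hd]
    by_contra hc
    exact hd ((h d (mem_support_iff.mpr hc)).symm)

/-- extract: either a positive-degree component is nonzero or p is homogeneous of degree 0 -/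
lemma exists_pos_comp (w : Fin 4 → ℕ) (p : R4 k) :
    (∃ m, 1 ≤ m ∧ weightedHomogeneousComponent w m p ≠ 0) ∨ IsWeightedHomogeneous w p 0 := by
  classical
  by_cases h : ∀ d ∈ p.support, Finsupp.weight w d = 0
  · right
    intro d hd
    exact h d (mem_support_iff.mpr hd)
  · left
    push_neg at h
    obtain ⟨d, hd, hw⟩ := h
    refine ⟨Finsupp.weight w d, by omega, ?_⟩
    intro hc
    have := congrArg (coeff d) hc
    rw [coeff_weightedHomogeneousComponent, if_pos rfl, coeff_zero] at this
    exact mem_support_iff.mp hd this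

/-- π fixes polynomials whose support satisfies Q, when σ fixes corresponding variables -/
lemma aeval_fix (σ : Fin 4 → R4 k) {Q : (Fin 4 →₀ ℕ) → Prop}
    (hσ : ∀ (d : Fin 4 →₀ ℕ), Q d → ∀ i ∈ d.support, σ i = X i)
    {p : R4 k} (hp : GoodSupp Q p) : aeval σ p = p := by
  have h1 : (aeval σ p : R4 k) = ∑ d ∈ p.support, aeval σ (monomial d (coeff d p)) := by
    rw [← map_sum, support_sum_monomial_coeff]
  rw [h1]
  conv_rhs => rw [← support_sum_monomial_coeff p]
  apply Finset.sum_congr rfl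
  intro d hd
  rw [monomial_eq, map_mul]
  rw [show (aeval σ) (C (coeff d p) : R4 k) = C (coeff d p) from aeval_C _ _]
  congr 1
  rw [Finsupp.prod, map_prod]
  apply Finset.prod_congr rfl
  intro i hi
  rw [map_pow, aeval_X, hσ d (hp d hd) i hi]




def Q01 : (Fin 4 →₀ ℕ) → Prop := fun d => d 0 = 0 ∧ d 1 = 0

lemma Q01_zero : Q01 (0 : Fin 4 →₀ ℕ) := ⟨rfl, rfl⟩

lemma Q01_add : ∀ a b : Fin 4 →₀ ℕ, Q01 a → Q01 b → Q01 (a + b) := by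
  intro a b ⟨ha0, ha1⟩ ⟨hb0, hb1⟩
  constructor <;> simp [Finsupp.add_apply, ha0, ha1, hb0, hb1]

def σuv : Fin 4 → R4 k := ![0, 0, X 2, X 3]

lemma goodSupp_X {j : Fin 4} (hj : Q01 (Finsupp.single j 1)) :
    GoodSupp Q01 (X j : R4 k) := by
  intro d hd
  rw [MvPolynomial.support_X, Finset.mem_singleton] at hd
  subst hd; exact hj

lemma goodSupp_σuv : ∀ i, GoodSupp Q01 (σuv (k := k) i) := by
  intro i
  fin_cases i
  · exact goodSupp_zero Q01_zero
  · exact goodSupp_zero Q01_zero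
  · exact goodSupp_X ⟨by simp [Finsupp.single_apply], by simp [Finsupp.single_apply]⟩
  · exact goodSupp_X ⟨by simp [Finsupp.single_apply], by simp [Finsupp.single_apply]⟩

lemma σuv_fix {p : R4 k} (hp : GoodSupp Q01 p) : aeval σuv p = p := by
  refine aeval_fix σuv ?_ hp
  intro d hd i hi
  obtain ⟨h0, h1⟩ := hd
  have hne : d i ≠ 0 := Finsupp.mem_support_iff.mp hi
  fin_cases i
  · exact absurd h0 hne
  · exact absurd h1 hne
  · rfl
  · rfl

/-- the exponent vector of u^i v^(n-i) -/
def dm (n i : ℕ) : Fin 4 →₀ ℕ := Finsupp.single 2 i + Finsupp.single 3 (n - i)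

lemma dm_apply (n i : ℕ) :
    dm n i 0 = 0 ∧ dm n i 1 = 0 ∧ dm n i 2 = i ∧ dm n i 3 = n - i := by
  refine ⟨?_, ?_, ?_, ?_⟩ <;>
    simp [dm, Finsupp.add_apply, Finsupp.single_apply]

lemma weight_dm (n i : ℕ) (hi : i ≤ n) : Finsupp.weight w2 (dm n i) = n := by
  rw [weight_w2, (dm_apply n i).2.2.1, (dm_apply n i).2.2.2]
  omega

lemma d_eq_dm {d : Fin 4 →₀ ℕ} {n : ℕ} (h01 : Q01 d)
    (hw : Finsupp.weight w2 d = n) : d 2 ≤ n ∧ d = dm n (d 2) := by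
  rw [weight_w2] at hw
  refine ⟨by omega, ?_⟩
  obtain ⟨h0, h1⟩ := h01
  ext i
  fin_cases i
  · show d 0 = dm n (d 2) 0
    rw [h0, (dm_apply n (d 2)).1]
  · show d 1 = dm n (d 2) 1
    rw [h1, (dm_apply n (d 2)).2.1]
  · show d 2 = dm n (d 2) 2
    rw [(dm_apply n (d 2)).2.2.1]
  · show d 3 = dm n (d 2) 3
    rw [(dm_apply n (d 2)).2.2.2]
    omega

lemma dm_inj (n : ℕ) : Function.Injective (dm n) := by
  intro i j h
  have := congrArg (fun d : Fin 4 →₀ ℕ => d 2) h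
  simpa [(dm_apply n i).2.2.1, (dm_apply n j).2.2.1] using this

lemma monomial_dm (i j : ℕ) (c : k) :
    (monomial (Finsupp.single 2 i + Finsupp.single 3 j) c : R4 k) =
      C c * X 2 ^ i * X 3 ^ j := by
  rw [X_pow_eq_monomial, X_pow_eq_monomial, C_mul_monomial, monomial_mul]
  rw [mul_one, mul_one]

lemma X_pow_homog (j : Fin 4) (hj : j = 2 ∨ j = 3) (m : ℕ) :
    IsWeightedHomogeneous w2 ((X j : R4 k) ^ m) m := by
  rw [X_pow_eq_monomial]
  apply isWeightedHomogeneous_monomial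
  rw [weight_w2]
  rcases hj with h | h <;> subst h <;>
    simp [Finsupp.single_apply]

lemma comp_mul_linear (ℓ h : R4 k) (hℓ : IsWeightedHomogeneous w2 ℓ 1) (n : ℕ) (hn : 1 ≤ n) :
    weightedHomogeneousComponent w2 n (ℓ * h) =
      ℓ * weightedHomogeneousComponent w2 (n - 1) h := by
  have hsplit : ℓ * h = ℓ * weightedHomogeneousComponent w2 (n - 1) h +
      ℓ * (h - weightedHomogeneousComponent w2 (n - 1) h) := by ring
  rw [hsplit, map_add, comp_mul_eq_zero w2 ℓ
    (h - weightedHomogeneousComponent w2 (n - 1) h) n (by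
    intro a ha b hb
    have h1 := hℓ (mem_support_iff.mp ha)
    have h2 := (support_sub_comp w2 h (n - 1) b hb).2
    omega), add_zero]
  have hc := hℓ.mul (weightedHomogeneousComponent_isWeightedHomogeneous (n - 1) h)
  rw [show 1 + (n - 1) = n by omega] at hc
  exact hc.weightedHomogeneousComponent_same

-- STEP chunk
lemma step_factor [IsAlgClosed k] {n : ℕ} (hn : 1 ≤ n) {g : R4 k} (hg0 : g ≠ 0)
    (hQ : GoodSupp Q01 g) (hhom : IsWeightedHomogeneous w2 g n) :
    ∃ (a b : k) (h : R4 k), ¬(a = 0 ∧ b = 0) ∧ GoodSupp Q01 h ∧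
      IsWeightedHomogeneous w2 h (n - 1) ∧ g = (C a * X 2 + C b * X 3) * h := by
  classical
  set e : Polynomial k :=
    ∑ i ∈ Finset.range (n + 1), Polynomial.monomial i (coeff (dm n i) g) with he_def
  have coeff_e : ∀ i, e.coeff i =
      if i ∈ Finset.range (n + 1) then coeff (dm n i) g else 0 := by
    intro i
    rw [he_def, Polynomial.finset_sum_coeff]
    simp_rw [Polynomial.coeff_monomial]
    exact Finset.sum_ite_eq' (Finset.range (n + 1)) i _
  have hsupp : ∀ d ∈ g.support, d 2 ≤ n ∧ d = dm n (d 2) := fun d hd =>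
    d_eq_dm (hQ d hd) (hhom (mem_support_iff.mp hd))
  have hsub : g.support ⊆ (Finset.range (n + 1)).image (dm n) := by
    intro d hd
    obtain ⟨h1, h2⟩ := hsupp d hd
    exact Finset.mem_image.mpr ⟨d 2, Finset.mem_range.mpr (by omega), h2.symm⟩
  have g_eq : g = ∑ i ∈ Finset.range (n + 1), monomial (dm n i) (coeff (dm n i) g) := by
    have h1 : ∑ d ∈ g.support, monomial d (coeff d g) =
        ∑ d ∈ (Finset.range (n + 1)).image (dm n), monomial d (coeff d g) := by
      apply Finset.sum_subset hsub
      intro d _ hd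
      rw [MvPolynomial.notMem_support_iff.mp hd, monomial_zero]
    calc g = ∑ d ∈ g.support, monomial d (coeff d g) :=
          (support_sum_monomial_coeff g).symm
      _ = ∑ d ∈ (Finset.range (n + 1)).image (dm n), monomial d (coeff d g) := h1
      _ = ∑ i ∈ Finset.range (n + 1), monomial (dm n i) (coeff (dm n i) g) :=
          Finset.sum_image (fun i _ j _ h => dm_inj n h)
  have he0 : e ≠ 0 := by
    intro h0
    apply hg0
    rw [g_eq]
    apply Finset.sum_eq_zero
    intro i hi
    have h1 := coeff_e i
    rw [h0, Polynomial.coeff_zero, if_pos hi] at h1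
    rw [← h1, monomial_zero]
  by_cases hdeg : e.natDegree = 0
  · -- g = c0 * v^n
    have hC := Polynomial.eq_C_of_natDegree_le_zero (le_of_eq hdeg)
    have hc00 : e.coeff 0 ≠ 0 := by
      intro h0; apply he0; rw [hC, h0, map_zero]
    have hc0 : coeff (dm n 0) g ≠ 0 := by
      have h1 := coeff_e 0
      rw [if_pos (Finset.mem_range.mpr (by omega))] at h1
      rwa [h1] at hc00
    have hcoeffs : ∀ i, 1 ≤ i → coeff (dm n i) g = 0 := by
      intro i hi
      by_cases hin : i ∈ Finset.range (n + 1)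
      · have h1 := coeff_e i
        rw [if_pos hin, hC, Polynomial.coeff_C, if_neg (by omega)] at h1
        exact h1.symm
      · by_contra hc
        have hd := (hsupp (dm n i) (mem_support_iff.mpr hc)).1
        rw [(dm_apply n i).2.2.1] at hd
        exact hin (Finset.mem_range.mpr (by omega))
    set c0 : k := coeff (dm n 0) g with hc0_def
    have hg : g = monomial (dm n 0) c0 := by
      conv_lhs => rw [g_eq]
      apply Finset.sum_eq_single_of_mem 0 (Finset.mem_range.mpr (by omega))
      intro i _ hi
      rw [hcoeffs i (by omega), monomial_zero]
    refine ⟨0, c0, X 3 ^ (n - 1), by simp [hc0], ?_, ?_, ?_⟩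
    · intro d hd
      rw [X_pow_eq_monomial, support_monomial] at hd
      rw [if_neg (one_ne_zero)] at hd
      rw [Finset.mem_singleton] at hd
      subst hd
      constructor <;> simp [Finsupp.single_apply]
    · exact X_pow_homog 3 (Or.inr rfl) (n - 1)
    · have hxp : (X 3 : R4 k) ^ n = X 3 * X 3 ^ (n - 1) := by
        rw [← pow_succ']
        congr 1
        omega
      rw [hg, dm, show n - 0 = n from rfl, monomial_dm, pow_zero, mul_one, hxp]
      rw [map_zero]
      ring
  · -- root case
    have hdegpos : 0 < e.natDegree := Nat.pos_of_ne_zero hdeg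
    obtain ⟨r, hr⟩ := IsAlgClosed.exists_root e
      (Polynomial.natDegree_pos_iff_degree_pos.mp hdegpos).ne'
    set ℓ : R4 k := X 2 - C r * X 3 with hℓ_def
    set σg : Fin 4 → R4 k := ![X 0, X 1, C r * X 3, X 3] with hσg_def
    have hsubst : ∀ f : R4 k, f - aeval σg f ∈ Ideal.span {ℓ} := by
      intro f
      apply sub_aeval_mem
      intro i
      fin_cases i
      · show (X 0 : R4 k) - X 0 ∈ _
        rw [sub_self]; exact Ideal.zero_mem _
      · show (X 1 : R4 k) - X 1 ∈ _
        rw [sub_self]; exact Ideal.zero_mem _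
      · show (X 2 : R4 k) - C r * X 3 ∈ _
        exact Ideal.subset_span rfl
      · show (X 3 : R4 k) - X 3 ∈ _
        rw [sub_self]; exact Ideal.zero_mem _
    have hρg : aeval σg g = 0 := by
      conv_lhs => rw [g_eq]
      rw [map_sum]
      have hterm : ∀ i ∈ Finset.range (n + 1),
          (aeval σg (monomial (dm n i) (coeff (dm n i) g)) : R4 k) =
          C (coeff (dm n i) g * r ^ i) * X 3 ^ n := by
        intro i hi
        have hin : i ≤ n := by
          have := Finset.mem_range.mp hi; omega
        have hxp : (X 3 : R4 k) ^ i * X 3 ^ (n - i) = X 3 ^ n := by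
          rw [← pow_add]; congr 1; omega
        rw [dm, monomial_dm, map_mul, map_mul, map_pow, map_pow, aeval_C, aeval_X, aeval_X]
        rw [show (σg 2 : R4 k) = C r * X 3 from rfl, show (σg 3 : R4 k) = X 3 from rfl]
        rw [mul_pow, ← map_pow C r i, map_mul, ← hxp, MvPolynomial.algebraMap_eq]
        ring
      rw [Finset.sum_congr rfl hterm, ← Finset.sum_mul, ← map_sum C _ _]
      have heval : (∑ i ∈ Finset.range (n + 1), coeff (dm n i) g * r ^ i) = e.eval r := by
        rw [he_def, Polynomial.eval_finset_sum]
        simp_rw [Polynomial.eval_monomial]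
      rw [heval, hr, map_zero, zero_mul]
    have hdvd : ℓ ∣ g := by
      have h1 := hsubst g
      rw [hρg, sub_zero] at h1
      exact Ideal.mem_span_singleton.mp h1
    obtain ⟨hraw, hgr⟩ := hdvd
    have hℓhom : IsWeightedHomogeneous w2 ℓ 1 := by
      have h2 : (X 2 : R4 k) ∈ weightedHomogeneousSubmodule k w2 1 :=
        (mem_weightedHomogeneousSubmodule _ _ _ _).2 (isWeightedHomogeneous_X k w2 2)
      have hx := X_pow_homog (k := k) 3 (Or.inr rfl) 1
      rw [pow_one] at hx
      have h3' := (isWeightedHomogeneous_C w2 r (σ := Fin 4)).mul hx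
      rw [zero_add] at h3'
      have h3 : (C r * X 3 : R4 k) ∈ weightedHomogeneousSubmodule k w2 1 :=
        (mem_weightedHomogeneousSubmodule _ _ _ _).2 h3'
      exact (mem_weightedHomogeneousSubmodule _ _ _ _).1 (sub_mem h2 h3)
    have hπℓ : aeval σuv ℓ = ℓ := by
      simp only [hℓ_def, map_sub, map_mul, aeval_C, aeval_X]
      rfl
    have hg2 : g = ℓ * aeval σuv hraw := by
      calc g = aeval σuv g := (σuv_fix hQ).symm
        _ = aeval σuv ℓ * aeval σuv hraw := by rw [hgr, map_mul]
        _ = ℓ * aeval σuv hraw := by rw [hπℓ]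
    have hgh : g = ℓ * weightedHomogeneousComponent w2 (n - 1) (aeval σuv hraw) := by
      calc g = weightedHomogeneousComponent w2 n g :=
            (hhom.weightedHomogeneousComponent_same).symm
        _ = weightedHomogeneousComponent w2 n (ℓ * aeval σuv hraw) := by rw [← hg2]
        _ = ℓ * weightedHomogeneousComponent w2 (n - 1) (aeval σuv hraw) :=
            comp_mul_linear ℓ _ hℓhom n hn
    refine ⟨1, -r, weightedHomogeneousComponent w2 (n - 1) (aeval σuv hraw),
      by simp, ?_, weightedHomogeneousComponent_isWeightedHomogeneous _ _, ?_⟩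
    · exact goodSupp_comp (goodSupp_aeval Q01_zero Q01_add σuv goodSupp_σuv hraw) w2 (n - 1)
    · have hab : (C (1 : k) : R4 k) * X 2 + C (-r) * X 3 = ℓ := by
        rw [map_one, map_neg, hℓ_def]
        ring
      rw [hab]
      exact hgh

-- chunk 6
lemma C_mem_prime {P : Ideal (R4 k)} (hP : P.IsPrime) {c : k} (hc : C c ∈ P) : c = 0 := by
  by_contra h0
  apply hP.ne_top
  rw [Ideal.eq_top_iff_one]
  have h1 : (1 : R4 k) = C c⁻¹ * C c := by
    rw [← map_mul, inv_mul_cancel₀ h0, map_one]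
  rw [h1]
  exact Ideal.mul_mem_left _ _ hc

lemma eq_C_of_goodSupp {p : R4 k} (hQ : GoodSupp Q01 p)
    (hhom : IsWeightedHomogeneous w2 p 0) : p = C (coeff 0 p) := by
  have hsup : ∀ d ∈ p.support, d = 0 := by
    intro d hd
    have hw := hhom (mem_support_iff.mp hd)
    obtain ⟨h0, h1⟩ := hQ d hd
    rw [weight_w2] at hw
    ext i
    fin_cases i
    · exact h0
    · exact h1
    · show d 2 = 0; omega
    · show d 3 = 0; omega
  conv_lhs => rw [eq_monomial_of_supp hsup]
  simp

lemma linear_mem [IsAlgClosed k] (P : Ideal (R4 k)) (hP : P.IsPrime) :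
    ∀ n : ℕ, 1 ≤ n → ∀ g : R4 k, g ∈ P → g ≠ 0 → GoodSupp Q01 g →
      IsWeightedHomogeneous w2 g n →
      ∃ a b : k, ¬(a = 0 ∧ b = 0) ∧ C a * X 2 + C b * X 3 ∈ P := by
  intro n
  induction n with
  | zero => omega
  | succ n ih =>
    intro _ g hgP hg0 hQ hhom
    obtain ⟨a, b, h, hab, hQh, hhomh, hfac⟩ := step_factor (by omega) hg0 hQ hhom
    rcases hP.mem_or_mem (hfac ▸ hgP) with hl | hh
    · exact ⟨a, b, hab, hl⟩
    · have hh0 : h ≠ 0 := by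
        rintro rfl; rw [mul_zero] at hfac; exact hg0 hfac
      by_cases hn1 : 1 ≤ n
      · exact ih hn1 h hh hh0 hQh hhomh
      · exfalso
        have hn0 : n = 0 := by omega
        subst hn0
        have hC : h = C (coeff 0 h) := eq_C_of_goodSupp hQh hhomh
        have hc := C_mem_prime hP (hC ▸ hh)
        apply hh0
        rw [hC, hc, map_zero]

lemma X_mem_of_univar (P : Ideal (R4 k)) (hP : P.IsPrime)
    (hcomp : ∀ f ∈ P, ∀ n, weightedHomogeneousComponent w2 n f ∈ P)
    (j : Fin 4) (hj : j = 2 ∨ j = 3)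
    {h : R4 k} (hhP : h ∈ P) (hconst : ∀ c : k, h ≠ C c)
    (huni : GoodSupp (fun d => d = Finsupp.single j (d j)) h) : X j ∈ P := by
  classical
  have hwd : ∀ d : Fin 4 →₀ ℕ, d = Finsupp.single j (d j) → Finsupp.weight w2 d = d j := by
    intro d hd
    rw [weight_w2]
    conv_lhs => rw [hd]
    rcases hj with rfl | rfl <;> simp [Finsupp.single_apply]
  obtain ⟨d, hd, hdj⟩ : ∃ d ∈ h.support, d j ≠ 0 := by
    by_contra hcon
    push_neg at hcon
    apply hconst (coeff 0 h)
    have hsup : ∀ d ∈ h.support, d = 0 := by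
      intro d hd
      rw [huni d hd, hcon d hd, Finsupp.single_zero]
    conv_lhs => rw [eq_monomial_of_supp hsup]
    simp
  set m := d j with hm_def
  have hcm : weightedHomogeneousComponent w2 m h ≠ 0 := by
    intro h0
    have h1 := congrArg (coeff d) h0
    rw [coeff_weightedHomogeneousComponent, if_pos (hwd d (huni d hd)), coeff_zero] at h1
    exact mem_support_iff.mp hd h1
  have hcmP := hcomp h hhP m
  have hsup2 : ∀ d' ∈ (weightedHomogeneousComponent w2 m h).support,
      d' = Finsupp.single j m := by
    intro d' hd'
    have h1 : d' = Finsupp.single j (d' j) :=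
      goodSupp_comp huni w2 m d' hd'
    have h2 := (weightedHomogeneousComponent_isWeightedHomogeneous m h)
      (mem_support_iff.mp hd')
    rw [hwd d' h1] at h2
    rw [h2] at h1
    exact h1
  have heq := eq_monomial_of_supp hsup2
  set c := coeff (Finsupp.single j m) (weightedHomogeneousComponent w2 m h) with hc_def
  have hcne : c ≠ 0 := by
    intro h0; apply hcm; rw [heq, h0, monomial_zero]
  have hXm : (X j : R4 k) ^ m ∈ P := by
    have h1 : (X j : R4 k) ^ m = C c⁻¹ * monomial (Finsupp.single j m) c := by
      rw [C_mul_monomial, inv_mul_cancel₀ hcne, X_pow_eq_monomial]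
    rw [h1, ← heq]
    exact Ideal.mul_mem_left _ _ hcmP
  exact hP.mem_of_pow_mem m hXm

-- chunk 7 : classification
lemma mem_span2_left {x y : R4 k} : x ∈ Ideal.span {x, y} :=
  Ideal.subset_span (Set.mem_insert _ _)
lemma mem_span2_right {x y : R4 k} : y ∈ Ideal.span {x, y} :=
  Ideal.subset_span (Set.mem_insert_iff.mpr (Or.inr rfl))
lemma mem_span3_1 {x y z : R4 k} : x ∈ Ideal.span {x, y, z} :=
  Ideal.subset_span (Set.mem_insert _ _)
lemma mem_span3_2 {x y z : R4 k} : y ∈ Ideal.span {x, y, z} :=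
  Ideal.subset_span (Set.mem_insert_iff.mpr (Or.inr (Set.mem_insert _ _)))
lemma mem_span3_3 {x y z : R4 k} : z ∈ Ideal.span {x, y, z} :=
  Ideal.subset_span (Set.mem_insert_iff.mpr (Or.inr (Set.mem_insert_iff.mpr (Or.inr rfl))))
lemma mem_span4_1 {x y z w : R4 k} : x ∈ Ideal.span {x, y, z, w} :=
  Ideal.subset_span (Set.mem_insert _ _)
lemma mem_span4_2 {x y z w : R4 k} : y ∈ Ideal.span {x, y, z, w} :=
  Ideal.subset_span (Set.mem_insert_iff.mpr (Or.inr (Set.mem_insert _ _)))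
lemma mem_span4_3 {x y z w : R4 k} : z ∈ Ideal.span {x, y, z, w} :=
  Ideal.subset_span (Set.mem_insert_iff.mpr (Or.inr (Set.mem_insert_iff.mpr
    (Or.inr (Set.mem_insert _ _)))))
lemma mem_span4_4 {x y z w : R4 k} : w ∈ Ideal.span {x, y, z, w} :=
  Ideal.subset_span (Set.mem_insert_iff.mpr (Or.inr (Set.mem_insert_iff.mpr
    (Or.inr (Set.mem_insert_iff.mpr (Or.inr rfl))))))

/-- if all four variables are in a prime P, then P is the irrelevant maximal ideal -/
lemma eq_span4_of_X_mem (P : Ideal (R4 k)) (hP : P.IsPrime)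
    (h0 : X 0 ∈ P) (h1 : X 1 ∈ P) (h2 : X 2 ∈ P) (h3 : X 3 ∈ P) :
    P = Ideal.span {X 0, X 1, X 2, X 3} := by
  classical
  set S4 : Ideal (R4 k) := Ideal.span {X 0, X 1, X 2, X 3} with hS4
  have hS4P : S4 ≤ P := by
    rw [hS4, Ideal.span_le]
    intro x hx
    simp only [Set.mem_insert_iff, Set.mem_singleton_iff] at hx
    rcases hx with rfl | rfl | rfl | rfl
    exacts [h0, h1, h2, h3]
  apply le_antisymm _ hS4P
  intro f hf
  set σ0 : Fin 4 → R4 k := ![0, 0, 0, 0] with hσ0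
  have hs : f - aeval σ0 f ∈ S4 := by
    apply sub_aeval_mem
    intro i
    fin_cases i
    · show (X 0 : R4 k) - 0 ∈ S4; rw [sub_zero]; exact mem_span4_1
    · show (X 1 : R4 k) - 0 ∈ S4; rw [sub_zero]; exact mem_span4_2
    · show (X 2 : R4 k) - 0 ∈ S4; rw [sub_zero]; exact mem_span4_3
    · show (X 3 : R4 k) - 0 ∈ S4; rw [sub_zero]; exact mem_span4_4
  have hQ0 : GoodSupp (fun d : Fin 4 →₀ ℕ => d = 0) (aeval σ0 f : R4 k) := by
    apply goodSupp_aeval (Q := fun d : Fin 4 →₀ ℕ => d = 0) rfl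
      (fun a b ha hb => by rw [ha, hb, add_zero]) σ0
    · intro i
      fin_cases i <;> exact goodSupp_zero rfl
  have hCC : (aeval σ0 f : R4 k) = C (coeff 0 (aeval σ0 f)) := by
    conv_lhs => rw [eq_monomial_of_supp hQ0]
    simp
  have hCP : (aeval σ0 f : R4 k) ∈ P := by
    have h6 : f - aeval σ0 f ∈ P := hS4P hs
    have h7 : (aeval σ0 f : R4 k) = f - (f - aeval σ0 f) := by ring
    rw [h7]
    exact sub_mem hf h6
  have hc0 := C_mem_prime hP (hCC ▸ hCP)
  have hz : (aeval σ0 f : R4 k) = 0 := by rw [hCC, hc0, map_zero]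
  have h8 := hs
  rwa [hz, sub_zero] at h8

lemma classify [IsAlgClosed k] (P : Ideal (R4 k)) (hP : P.IsPrime)
    (h0 : X 0 ∈ P) (h1 : X 1 ∈ P)
    (hcomp : ∀ f ∈ P, ∀ n, weightedHomogeneousComponent w2 n f ∈ P) :
    P = Ideal.span {X 0, X 1} ∨
    (∃ a b : k, ¬(a = 0 ∧ b = 0) ∧ P = Ideal.span {X 0, X 1, C a * X 2 + C b * X 3}) ∨
    P = Ideal.span {X 0, X 1, X 2, X 3} := by
  classical
  have hsp01 : Ideal.span {(X 0 : R4 k), X 1} ≤ P := by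
    rw [Ideal.span_le]
    intro x hx
    simp only [Set.mem_insert_iff, Set.mem_singleton_iff] at hx
    rcases hx with rfl | rfl
    exacts [h0, h1]
  have hsubuv : ∀ f : R4 k, f - aeval σuv f ∈ Ideal.span {(X 0 : R4 k), X 1} := by
    intro f
    apply sub_aeval_mem
    intro i
    fin_cases i
    · show (X 0 : R4 k) - 0 ∈ _; rw [sub_zero]; exact mem_span2_left
    · show (X 1 : R4 k) - 0 ∈ _; rw [sub_zero]; exact mem_span2_right
    · show (X 2 : R4 k) - X 2 ∈ _; rw [sub_self]; exact Ideal.zero_mem _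
    · show (X 3 : R4 k) - X 3 ∈ _; rw [sub_self]; exact Ideal.zero_mem _
  by_cases hcase : ∀ f ∈ P, (aeval σuv f : R4 k) = 0
  · left
    apply le_antisymm _ hsp01
    intro f hf
    have h2 := hsubuv f
    rwa [hcase f hf, sub_zero] at h2
  · push_neg at hcase
    obtain ⟨f₀, hf₀P, hf₀⟩ := hcase
    have hg₀P : (aeval σuv f₀ : R4 k) ∈ P := by
      have h2 : f₀ - aeval σuv f₀ ∈ P := hsp01 (hsubuv f₀)
      have h3 : (aeval σuv f₀ : R4 k) = f₀ - (f₀ - aeval σuv f₀) := by ring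
      rw [h3]; exact sub_mem hf₀P h2
    have hQg₀ : GoodSupp Q01 (aeval σuv f₀ : R4 k) :=
      goodSupp_aeval Q01_zero Q01_add σuv goodSupp_σuv f₀
    have hlin : ∃ a b : k, ¬(a = 0 ∧ b = 0) ∧ C a * X 2 + C b * X 3 ∈ P := by
      rcases exists_pos_comp w2 (aeval σuv f₀ : R4 k) with ⟨m, hm1, hmne⟩ | hhom0
      · exact linear_mem P hP m hm1 _ (hcomp _ hg₀P m) hmne (goodSupp_comp hQg₀ w2 m)
          (weightedHomogeneousComponent_isWeightedHomogeneous m _)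
      · exfalso
        have hCg := eq_C_of_goodSupp hQg₀ hhom0
        have hc := C_mem_prime hP (hCg ▸ hg₀P)
        apply hf₀
        rw [hCg, hc, map_zero]
    obtain ⟨a, b, hab, hℓP⟩ := hlin
    set J : Ideal (R4 k) := Ideal.span {X 0, X 1, C a * X 2 + C b * X 3} with hJ_def
    have hJP : J ≤ P := by
      rw [hJ_def, Ideal.span_le]
      intro x hx
      simp only [Set.mem_insert_iff, Set.mem_singleton_iff] at hx
      rcases hx with rfl | rfl | rfl
      exacts [h0, h1, hℓP]
    by_cases hPJ : P ≤ J
    · right; left; exact ⟨a, b, hab, le_antisymm hPJ hJP⟩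
    right; right
    obtain ⟨f, hfP, hfJ⟩ := SetLike.not_le_iff_exists.mp hPJ
    have hX23 : (X 2 : R4 k) ∈ P ∧ (X 3 : R4 k) ∈ P := by
      by_cases ha : a = 0
      · -- ℓ = C b X3
        have hb : b ≠ 0 := fun hb => hab ⟨ha, hb⟩
        have hlX3 : (X 3 : R4 k) = C b⁻¹ * (C a * X 2 + C b * X 3) := by
          rw [ha, map_zero, zero_mul, zero_add, ← mul_assoc, ← map_mul,
            inv_mul_cancel₀ hb, map_one, one_mul]
        have hX3 : (X 3 : R4 k) ∈ P := by
          rw [hlX3]; exact Ideal.mul_mem_left _ _ hℓP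
        have hX3J : (X 3 : R4 k) ∈ J := by
          rw [hlX3]; exact Ideal.mul_mem_left _ _ mem_span3_3
        -- univariate in X 2
        set σ2 : Fin 4 → R4 k := ![0, 0, X 2, 0] with hσ2
        have hsub2 : f - aeval σ2 f ∈ J := by
          apply sub_aeval_mem
          intro i
          fin_cases i
          · show (X 0 : R4 k) - 0 ∈ J; rw [sub_zero]; exact mem_span3_1
          · show (X 1 : R4 k) - 0 ∈ J; rw [sub_zero]; exact mem_span3_2
          · show (X 2 : R4 k) - X 2 ∈ J; rw [sub_self]; exact Ideal.zero_mem _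
          · show (X 3 : R4 k) - 0 ∈ J; rw [sub_zero]; exact hX3J
        have hhJ : (aeval σ2 f : R4 k) ∉ J := by
          intro hmem
          apply hfJ
          have h5 : f = (f - aeval σ2 f) + aeval σ2 f := by ring
          rw [h5]; exact add_mem hsub2 hmem
        have hhP2 : (aeval σ2 f : R4 k) ∈ P := by
          have h6 : f - aeval σ2 f ∈ P := hJP hsub2
          have h7 : (aeval σ2 f : R4 k) = f - (f - aeval σ2 f) := by ring
          rw [h7]; exact sub_mem hfP h6
        have huni : GoodSupp (fun d : Fin 4 →₀ ℕ => d = Finsupp.single 2 (d 2))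
            (aeval σ2 f : R4 k) := by
          apply goodSupp_aeval (Q := fun d : Fin 4 →₀ ℕ => d = Finsupp.single 2 (d 2))
            (by simp)
            (fun x y hx hy => by
              conv_lhs => rw [hx, hy]
              rw [← Finsupp.single_add]
              congr 1) σ2
          intro i
          fin_cases i
          · exact goodSupp_zero (by simp)
          · exact goodSupp_zero (by simp)
          · intro d hd
            have hd' : d ∈ (X 2 : R4 k).support := hd
            rw [MvPolynomial.support_X, Finset.mem_singleton] at hd'
            subst hd'
            simp
          · exact goodSupp_zero (by simp)
        have hconst : ∀ c : k, (aeval σ2 f : R4 k) ≠ C c := by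
          intro c hc
          have := C_mem_prime hP (hc ▸ hhP2)
          apply hhJ
          rw [hc, this, map_zero]
          exact Ideal.zero_mem _
        have hX2 := X_mem_of_univar P hP hcomp 2 (Or.inl rfl) hhP2 hconst huni
        exact ⟨hX2, hX3⟩
      · -- a ≠ 0
        set r : k := -(a⁻¹ * b) with hr_def
        have hgen : (X 2 : R4 k) - C r * X 3 = C a⁻¹ * (C a * X 2 + C b * X 3) := by
          have hone : (C a⁻¹ : R4 k) * C a = 1 := by
            rw [← map_mul, inv_mul_cancel₀ ha, map_one]
          calc (X 2 : R4 k) - C r * X 3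
              = X 2 + C (a⁻¹ * b) * X 3 := by
                rw [hr_def, map_neg, map_mul]; ring
            _ = (C a⁻¹ * C a) * X 2 + (C a⁻¹ * C b) * X 3 := by
                rw [hone, one_mul, map_mul]
            _ = C a⁻¹ * (C a * X 2 + C b * X 3) := by ring
        have hgenJ : (X 2 : R4 k) - C r * X 3 ∈ J := by
          rw [hgen]; exact Ideal.mul_mem_left _ _ mem_span3_3
        set σ3 : Fin 4 → R4 k := ![0, 0, C r * X 3, X 3] with hσ3
        have hsub3 : f - aeval σ3 f ∈ J := by
          apply sub_aeval_mem
          intro i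
          fin_cases i
          · show (X 0 : R4 k) - 0 ∈ J; rw [sub_zero]; exact mem_span3_1
          · show (X 1 : R4 k) - 0 ∈ J; rw [sub_zero]; exact mem_span3_2
          · show (X 2 : R4 k) - C r * X 3 ∈ J; exact hgenJ
          · show (X 3 : R4 k) - X 3 ∈ J; rw [sub_self]; exact Ideal.zero_mem _
        have hhJ : (aeval σ3 f : R4 k) ∉ J := by
          intro hmem
          apply hfJ
          have h5 : f = (f - aeval σ3 f) + aeval σ3 f := by ring
          rw [h5]; exact add_mem hsub3 hmem
        have hhP3 : (aeval σ3 f : R4 k) ∈ P := by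
          have h6 : f - aeval σ3 f ∈ P := hJP hsub3
          have h7 : (aeval σ3 f : R4 k) = f - (f - aeval σ3 f) := by ring
          rw [h7]; exact sub_mem hfP h6
        have huni : GoodSupp (fun d : Fin 4 →₀ ℕ => d = Finsupp.single 3 (d 3))
            (aeval σ3 f : R4 k) := by
          have hQz : (0 : Fin 4 →₀ ℕ) = Finsupp.single 3 ((0 : Fin 4 →₀ ℕ) 3) := by
            simp
          have hQa : ∀ x y : Fin 4 →₀ ℕ, x = Finsupp.single 3 (x 3) →
              y = Finsupp.single 3 (y 3) → x + y = Finsupp.single 3 ((x + y) 3) := by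
            intro x y hx hy
            conv_lhs => rw [hx, hy]
            rw [← Finsupp.single_add]
            congr 1
          apply goodSupp_aeval (Q := fun d : Fin 4 →₀ ℕ => d = Finsupp.single 3 (d 3))
            hQz hQa σ3
          intro i
          fin_cases i
          · exact goodSupp_zero hQz
          · exact goodSupp_zero hQz
          · apply goodSupp_mul hQa
            · intro d hd
              rw [mem_support_iff, coeff_C] at hd
              by_cases hdz : (0 : Fin 4 →₀ ℕ) = d
              · rw [← hdz]; exact hQz
              · rw [if_neg hdz] at hd; exact absurd rfl hd
            · intro d hd
              rw [show (X 3 : R4 k).support = {Finsupp.single 3 1} from MvPolynomial.support_X,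
                Finset.mem_singleton] at hd
              subst hd
              simp
          · intro d hd
            have hd' : d ∈ (X 3 : R4 k).support := hd
            rw [MvPolynomial.support_X, Finset.mem_singleton] at hd'
            subst hd'
            simp
        have hconst : ∀ c : k, (aeval σ3 f : R4 k) ≠ C c := by
          intro c hc
          have := C_mem_prime hP (hc ▸ hhP3)
          apply hhJ
          rw [hc, this, map_zero]
          exact Ideal.zero_mem _
        have hX3 := X_mem_of_univar P hP hcomp 3 (Or.inr rfl) hhP3 hconst huni
        have hX2 : (X 2 : R4 k) ∈ P := by
          have h8 : (X 2 : R4 k) = (X 2 - C r * X 3) + C r * X 3 := by ring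
          rw [h8, hgen]
          exact add_mem (Ideal.mul_mem_left _ _ hℓP) (Ideal.mul_mem_left _ _ hX3)
        exact ⟨hX2, hX3⟩
    exact eq_span4_of_X_mem P hP h0 h1 hX23.1 hX23.2

-- chunk 8 : rename transport
lemma weight_mapDomain (e : Fin 4 → Fin 4) (w : Fin 4 → ℕ) (d : Fin 4 →₀ ℕ) :
    Finsupp.weight w (Finsupp.mapDomain e d) = Finsupp.weight (w ∘ e) d := by
  rw [Finsupp.weight_apply, Finsupp.weight_apply,
    Finsupp.sum_mapDomain_index (fun i => zero_smul ℕ (w i))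
      (fun i b1 b2 => add_smul b1 b2 (w i))]
  rfl

lemma comp_rename (e : Fin 4 ≃ Fin 4) (w : Fin 4 → ℕ) (n : ℕ) (p : R4 k) :
    rename e (weightedHomogeneousComponent (w ∘ e) n p) =
      weightedHomogeneousComponent w n (rename e p) := by
  classical
  induction p using MvPolynomial.induction_on' with
  | add p q hp hq => simp only [map_add, hp, hq]
  | monomial d c =>
      rw [rename_monomial]
      by_cases hn : Finsupp.weight (w ∘ e) d = n
      · rw [IsWeightedHomogeneous.weightedHomogeneousComponent_same
            (isWeightedHomogeneous_monomial _ _ _ hn), rename_monomial,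
          IsWeightedHomogeneous.weightedHomogeneousComponent_same
            (isWeightedHomogeneous_monomial _ _ _
              (by rw [weight_mapDomain]; exact hn))]
      · rw [IsWeightedHomogeneous.weightedHomogeneousComponent_ne _
            (isWeightedHomogeneous_monomial _ _ _ rfl) (fun h => hn h.symm),
          map_zero,
          IsWeightedHomogeneous.weightedHomogeneousComponent_ne _
            (isWeightedHomogeneous_monomial _ _ _ rfl)
            (fun h => hn (by rw [← weight_mapDomain e w d]; exact h.symm))]

end Stmt7Aux

open Stmt7Aux in
/-- If U is basepoint free, every associated prime of R/I_U is one of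
⟨s,t⟩, ⟨u,v⟩, ⟨s,t,au+bv⟩, ⟨u,v,as+bt⟩ (with (a,b) ≠ (0,0)), or ⟨s,t,u,v⟩. -/
theorem statement7 {k : Type*} [Field k] [IsAlgClosed k]
    (U : Submodule k (MvPolynomial (Fin 4) k))
    (hU : U ≤ biDeg k 2 1)
    (hdim : Module.finrank k ↥U = 4)
    (hbpf : (Ideal.span (U : Set (MvPolynomial (Fin 4) k))).radical =
      Ideal.span {X 0, X 1} ⊓ Ideal.span {X 2, X 3}) :
    ∀ P ∈ associatedPrimes (MvPolynomial (Fin 4) k)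
        (MvPolynomial (Fin 4) k ⧸ Ideal.span (U : Set (MvPolynomial (Fin 4) k))),
      P = Ideal.span {X 0, X 1} ∨ P = Ideal.span {X 2, X 3} ∨
      (∃ a b : k, ¬ (a = 0 ∧ b = 0) ∧ P = Ideal.span {X 0, X 1, C a * X 2 + C b * X 3}) ∨
      (∃ a b : k, ¬ (a = 0 ∧ b = 0) ∧ P = Ideal.span {X 2, X 3, C a * X 0 + C b * X 1}) ∨
      P = Ideal.span {X 0, X 1, X 2, X 3} := by
  classical
  intro P hP
  obtain ⟨hprime, x, hx⟩ := isAssociatedPrime_iff.mp hP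
  obtain ⟨x₀, rfl⟩ := Ideal.Quotient.mk_surjective x
  set I : Ideal (MvPolynomial (Fin 4) k) := Ideal.span (U : Set (MvPolynomial (Fin 4) k))
    with hI_def
  have hPmem : ∀ r : MvPolynomial (Fin 4) k, r ∈ P ↔ r * x₀ ∈ I := by
    intro r
    rw [hx, Submodule.mem_colon_singleton, Submodule.mem_bot]
    have hsm : r • (Ideal.Quotient.mk I x₀) = Ideal.Quotient.mk I (r * x₀) := rfl
    rw [hsm, Ideal.Quotient.eq_zero_iff_mem]
  have hU1 : ∀ u ∈ (U : Set (MvPolynomial (Fin 4) k)), ∃ m, IsWeightedHomogeneous w1 u m :=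
    fun u hu => ⟨2, fun d hd => by rw [weight_w1]; exact ((hU hu) d (mem_support_iff.mpr hd)).1⟩
  have hU2 : ∀ u ∈ (U : Set (MvPolynomial (Fin 4) k)), ∃ m, IsWeightedHomogeneous w2 u m :=
    fun u hu => ⟨1, fun d hd => by rw [weight_w2]; exact ((hU hu) d (mem_support_iff.mpr hd)).2⟩
  have hPcomp1 : ∀ f ∈ P, ∀ n, weightedHomogeneousComponent w1 n f ∈ P :=
    prime_comp_mem w1 I P hprime (fun f hf n => span_comp_mem w1 _ hU1 hf n) x₀ hPmem
  have hPcomp2 : ∀ f ∈ P, ∀ n, weightedHomogeneousComponent w2 n f ∈ P :=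
    prime_comp_mem w2 I P hprime (fun f hf n => span_comp_mem w2 _ hU2 hf n) x₀ hPmem
  have hIP : I ≤ P := fun r hr => (hPmem r).mpr (Ideal.mul_mem_right x₀ I hr)
  have hrad : Ideal.span {(X 0 : MvPolynomial (Fin 4) k), X 1} ⊓
      Ideal.span {(X 2 : MvPolynomial (Fin 4) k), X 3} ≤ P := by
    rw [← hbpf]
    exact hprime.radical_le_iff.mpr hIP
  have hor := (Ideal.IsPrime.mul_le hprime).mp (le_trans Ideal.mul_le_inf hrad)
  rcases hor with h01 | h23
  · have hX0 : (X 0 : MvPolynomial (Fin 4) k) ∈ P := h01 mem_span2_left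
    have hX1 : (X 1 : MvPolynomial (Fin 4) k) ∈ P := h01 mem_span2_right
    rcases classify P hprime hX0 hX1 hPcomp2 with hc | ⟨a, b, hab, hc⟩ | hc
    · exact Or.inl hc
    · exact Or.inr (Or.inr (Or.inl ⟨a, b, hab, hc⟩))
    · exact Or.inr (Or.inr (Or.inr (Or.inr hc)))
  · -- swap the roles via the permutation (0 2)(1 3)
    set e : Fin 4 ≃ Fin 4 := (Equiv.swap 0 2).trans (Equiv.swap 1 3) with he_def
    have he0 : e 0 = 2 := by decide
    have he1 : e 1 = 3 := by decide
    have he2 : e 2 = 0 := by decide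
    have he3 : e 3 = 1 := by decide
    set ψ : MvPolynomial (Fin 4) k →+* MvPolynomial (Fin 4) k :=
      (rename e : MvPolynomial (Fin 4) k →ₐ[k] MvPolynomial (Fin 4) k).toRingHom with hψ_def
    have hψapp : ∀ g, ψ g = rename e g := fun g => rfl
    have hψsurj : Function.Surjective ψ := fun g =>
      ⟨rename e.symm g, by rw [hψapp, rename_rename]; simp⟩
    set P' : Ideal (MvPolynomial (Fin 4) k) := Ideal.comap ψ P with hP'_def
    have hP'prime : P'.IsPrime := Ideal.IsPrime.comap ψ
    have hwe : w1 ∘ e = w2 := by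
      funext i
      fin_cases i <;> decide
    have hX0' : (X 0 : MvPolynomial (Fin 4) k) ∈ P' := by
      rw [hP'_def, Ideal.mem_comap, hψapp, rename_X, he0]
      exact h23 mem_span2_left
    have hX1' : (X 1 : MvPolynomial (Fin 4) k) ∈ P' := by
      rw [hP'_def, Ideal.mem_comap, hψapp, rename_X, he1]
      exact h23 mem_span2_right
    have hcomp' : ∀ f ∈ P', ∀ n, weightedHomogeneousComponent w2 n f ∈ P' := by
      intro f hf n
      rw [hP'_def, Ideal.mem_comap, hψapp]
      have hrw : rename e (weightedHomogeneousComponent w2 n f) =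
          weightedHomogeneousComponent w1 n (rename e f) := by
        rw [← hwe]
        exact comp_rename e w1 n f
      rw [hrw]
      exact hPcomp1 _ (Ideal.mem_comap.mp hf) n
    have hPP' : Ideal.map ψ P' = P := Ideal.map_comap_of_surjective ψ hψsurj P
    have hψX0 : ψ (X 0) = X 2 := by rw [hψapp, rename_X, he0]
    have hψX1 : ψ (X 1) = X 3 := by rw [hψapp, rename_X, he1]
    have hψX2 : ψ (X 2) = X 0 := by rw [hψapp, rename_X, he2]
    have hψX3 : ψ (X 3) = X 1 := by rw [hψapp, rename_X, he3]
    rcases classify P' hP'prime hX0' hX1' hcomp' with hc | ⟨a, b, hab, hc⟩ | hc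
    · refine Or.inr (Or.inl ?_)
      rw [← hPP', hc, Ideal.map_span]
      congr 1
      rw [Set.image_insert_eq, Set.image_singleton, hψX0, hψX1]
    · refine Or.inr (Or.inr (Or.inr (Or.inl ⟨a, b, hab, ?_⟩)))
      rw [← hPP', hc, Ideal.map_span]
      congr 1
      rw [Set.image_insert_eq, Set.image_insert_eq, Set.image_singleton, hψX0, hψX1]
      have : ψ (C a * X 2 + C b * X 3) = C a * X 0 + C b * X 1 := by
        rw [map_add, map_mul, map_mul, hψX2, hψX3, hψapp, hψapp, rename_C, rename_C]
      rw [this]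
    · refine Or.inr (Or.inr (Or.inr (Or.inr ?_)))
      rw [← hPP', hc, Ideal.map_span]
      have himg : ψ '' {X 0, X 1, X 2, X 3} =
          ({X 0, X 1, X 2, X 3} : Set (MvPolynomial (Fin 4) k)) := by
        rw [Set.image_insert_eq, Set.image_insert_eq, Set.image_insert_eq,
          Set.image_singleton, hψX0, hψX1, hψX2, hψX3]
        ext z
        simp only [Set.mem_insert_iff, Set.mem_singleton_iff]
        tauto
      rw [himg]
end
end

section
/- If there exists a nonzero linear form l = au+bv of bidegree (0,1) such that s²l, stl, and t²l all lie in U, then U is not basepoint free. -/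
open MvPolynomial

noncomputable section

lemma eval_monomial_quad {k : Type*} [CommRing k] {d : Fin 4 →₀ ℕ} (hd : d 0 + d 1 = 2)
    (c x y u v : k) :
    eval ![x,y,u,v] (monomial d c) =
      eval ![1,0,u,v] (monomial d c) * x^2
      + (eval ![1,1,u,v] (monomial d c) - eval ![1,0,u,v] (monomial d c)
          - eval ![0,1,u,v] (monomial d c)) * (x*y)
      + eval ![0,1,u,v] (monomial d c) * y^2 := by
  have key : ∀ w z : k, eval ![w,z,u,v] (monomial d c)
      = c * (w ^ d 0 * z ^ d 1 * u ^ d 2 * v ^ d 3) := by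
    intro w z
    rw [eval_monomial, Finsupp.prod_pow, Fin.prod_univ_four]
    simp [Matrix.cons_val_one, Matrix.head_cons]
  simp only [key]
  have : d 0 = 0 ∧ d 1 = 2 ∨ d 0 = 1 ∧ d 1 = 1 ∨ d 0 = 2 ∧ d 1 = 0 := by omega
  rcases this with ⟨h0, h1⟩ | ⟨h0, h1⟩ | ⟨h0, h1⟩ <;> rw [h0, h1] <;> norm_num <;> ring

lemma biDeg_eval_quad {k : Type*} [CommRing k] {p : MvPolynomial (Fin 4) k}
    (hp : ∀ d ∈ p.support, d 0 + d 1 = 2) (x y u v : k) :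
    eval ![x,y,u,v] p =
      eval ![1,0,u,v] p * x^2
      + (eval ![1,1,u,v] p - eval ![1,0,u,v] p - eval ![0,1,u,v] p) * (x*y)
      + eval ![0,1,u,v] p * y^2 := by
  conv_lhs => rw [p.as_sum]
  conv_rhs => rw [p.as_sum]
  simp only [map_sum]
  rw [← Finset.sum_sub_distrib, ← Finset.sum_sub_distrib, Finset.sum_mul, Finset.sum_mul,
    Finset.sum_mul, ← Finset.sum_add_distrib, ← Finset.sum_add_distrib]
  refine Finset.sum_congr rfl fun d hd => ?_
  exact eval_monomial_quad (hp d hd) _ x y u v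

lemma indep_three {k : Type*} [Field k] {a b : k} (hab : ¬ (a = 0 ∧ b = 0)) :
    LinearIndependent k
      ![(X 0 ^ 2 * (C a * X 2 + C b * X 3) : MvPolynomial (Fin 4) k),
        X 0 * X 1 * (C a * X 2 + C b * X 3),
        X 1 ^ 2 * (C a * X 2 + C b * X 3)] := by
  obtain ⟨u0, v0, huv⟩ : ∃ u0 v0 : k, a * u0 + b * v0 = 1 := by
    by_cases ha : a = 0
    · have hb : b ≠ 0 := fun h => hab ⟨ha, h⟩
      exact ⟨0, b⁻¹, by field_simp [ha]; ring⟩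
    · exact ⟨a⁻¹, 0, by field_simp; ring⟩
  rw [Fintype.linearIndependent_iff]
  intro g hg
  have key : ∀ x y : k, g 0 * (x^2) + g 1 * (x*y) + g 2 * (y^2) = 0 := by
    intro x y
    have := congrArg (eval ![x, y, u0, v0]) hg
    simpa [Fin.sum_univ_three, smul_eval, huv, mul_comm, mul_assoc, mul_left_comm] using this
  have e0 := key 1 0
  have e1 := key 1 1
  have e2 := key 0 1
  norm_num at e0 e1 e2
  intro i
  fin_cases i <;> simp_all

/-- If there is a nonzero linear form l = au+bv of bidegree (0,1) with
s²l, stl, t²l ∈ U, then U is not basepoint free. -/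
theorem statement10 {k : Type*} [Field k] [IsAlgClosed k]
    (U : Submodule k (MvPolynomial (Fin 4) k))
    (hU : U ≤ biDeg k 2 1)
    (hdim : Module.finrank k ↥U = 4)
    (a b : k) (hab : ¬ (a = 0 ∧ b = 0))
    (h1 : X 0 ^ 2 * (C a * X 2 + C b * X 3) ∈ U)
    (h2 : X 0 * X 1 * (C a * X 2 + C b * X 3) ∈ U)
    (h3 : X 1 ^ 2 * (C a * X 2 + C b * X 3) ∈ U) :
    ¬ ((Ideal.span (U : Set (MvPolynomial (Fin 4) k))).radical =
      Ideal.span {X 0, X 1} ⊓ Ideal.span {X 2, X 3}) := by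
  intro hrad
  have hInd := indep_three (k := k) hab
  haveI : FiniteDimensional k U := FiniteDimensional.of_finrank_pos (by rw [hdim]; norm_num)
  set v3 : Fin 3 → MvPolynomial (Fin 4) k :=
    ![X 0 ^ 2 * (C a * X 2 + C b * X 3),
      X 0 * X 1 * (C a * X 2 + C b * X 3),
      X 1 ^ 2 * (C a * X 2 + C b * X 3)] with hv3
  haveI : FiniteDimensional k (Submodule.span k (Set.range v3)) :=
    FiniteDimensional.span_of_finite k (Set.finite_range v3)
  have hspan3 : Module.finrank k (Submodule.span k (Set.range v3)) = 3 := by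
    rw [finrank_span_eq_card hInd]; simp
  obtain ⟨q, hqU, hq⟩ : ∃ q ∈ U, q ∉ Submodule.span k (Set.range v3) := by
    by_contra h
    push_neg at h
    have hle : U ≤ Submodule.span k (Set.range v3) := h
    have := Submodule.finrank_mono hle
    rw [hdim, hspan3] at this
    omega
  have hInd4 : LinearIndependent k (Fin.cons q v3) :=
    linearIndependent_fin_cons.2 ⟨hInd, hq⟩
  have hWle : Submodule.span k (Set.range (Fin.cons q v3)) ≤ U := by
    rw [Submodule.span_le]
    rintro _ ⟨i, rfl⟩
    refine Fin.cases ?_ (fun j => ?_) i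
    · simpa using hqU
    · fin_cases j <;> simpa [hv3] using (by assumption : _)
  have hW : Module.finrank k (Submodule.span k (Set.range (Fin.cons q v3))) = 4 := by
    rw [finrank_span_eq_card hInd4]; simp
  have hUeq : Submodule.span k (Set.range (Fin.cons q v3)) = U :=
    Submodule.eq_of_le_of_finrank_le hWle (by rw [hdim, hW])
  set A := eval ![1,0,b,-a] q with hA'
  set Cc := eval ![0,1,b,-a] q with hCc'
  set B := eval ![1,1,b,-a] q - A - Cc with hB'
  obtain ⟨x0, y0, hxy, hroot⟩ :
      ∃ x0 y0 : k, (x0 ≠ 0 ∨ y0 ≠ 0) ∧ A*x0^2 + B*(x0*y0) + Cc*y0^2 = 0 := by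
    by_cases hA : A = 0
    · exact ⟨1, 0, Or.inl one_ne_zero, by simp [hA]⟩
    · obtain ⟨r, hr⟩ := IsAlgClosed.exists_root
        (Polynomial.C A * Polynomial.X^2 + Polynomial.C B * Polynomial.X + Polynomial.C Cc)
        (by rw [Polynomial.degree_quadratic hA]; norm_num)
      refine ⟨r, 1, Or.inr one_ne_zero, ?_⟩
      have h := hr
      simp [Polynomial.IsRoot] at h
      linear_combination h
  set P : Fin 4 → k := ![x0, y0, b, -a] with hP
  have hl_eval : ∀ x y : k, eval ![x,y,b,-a] ((C a * X 2 + C b * X 3 : MvPolynomial (Fin 4) k)) = 0 := by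
    intro x y; simp; ring
  have hq_eval : eval P q = 0 := by
    have hsupp : ∀ d ∈ q.support, d 0 + d 1 = 2 := fun d hd => ((hU hqU) d hd).1
    rw [hP, biDeg_eval_quad hsupp]
    rw [← hA', ← hCc']
    linear_combination hroot
  have hvanish : ∀ p ∈ U, eval P p = 0 := by
    intro p hp
    rw [← hUeq] at hp
    induction hp using Submodule.span_induction with
    | mem z hz =>
        obtain ⟨i, rfl⟩ := hz
        refine Fin.cases ?_ (fun j => ?_) i
        · simpa using hq_eval
        · simp only [Fin.cons_succ]
          fin_cases j
          · show (eval ![x0,y0,b,-a]) (X 0 ^ 2 * (C a * X 2 + C b * X 3)) = 0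
            rw [map_mul, hl_eval, mul_zero]
          · show (eval ![x0,y0,b,-a]) (X 0 * X 1 * (C a * X 2 + C b * X 3)) = 0
            rw [map_mul, hl_eval, mul_zero]
          · show (eval ![x0,y0,b,-a]) (X 1 ^ 2 * (C a * X 2 + C b * X 3)) = 0
            rw [map_mul, hl_eval, mul_zero]
    | zero => simp
    | add x y _ _ hx hy => simp [map_add, hx, hy]
    | smul c x _ hx => simp [smul_eval, hx]
  have hker : (Ideal.span (U : Set (MvPolynomial (Fin 4) k))).radical ≤ RingHom.ker (eval P) := by
    refine (Ideal.IsPrime.radical_le_iff (RingHom.ker_isPrime _)).2 ?_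
    rw [Ideal.span_le]
    intro p hp
    exact hvanish p hp
  rw [hrad] at hker
  obtain ⟨f1, hf1mem, hf1⟩ : ∃ f1 : MvPolynomial (Fin 4) k,
      f1 ∈ ({X 0, X 1} : Set (MvPolynomial (Fin 4) k)) ∧ eval P f1 ≠ 0 := by
    rcases hxy with hx | hy
    · exact ⟨X 0, Or.inl rfl, by simpa [hP] using hx⟩
    · exact ⟨X 1, Or.inr rfl, by simpa [hP] using hy⟩
  obtain ⟨f2, hf2mem, hf2⟩ : ∃ f2 : MvPolynomial (Fin 4) k,
      f2 ∈ ({X 2, X 3} : Set (MvPolynomial (Fin 4) k)) ∧ eval P f2 ≠ 0 := by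
    by_cases hb : b = 0
    · have ha : a ≠ 0 := fun h => hab ⟨h, hb⟩
      exact ⟨X 3, Or.inr rfl, by simpa [hP] using neg_ne_zero.2 ha⟩
    · exact ⟨X 2, Or.inl rfl, by simpa [hP] using hb⟩
  have hmem : f1 * f2 ∈ Ideal.span {X 0, X 1} ⊓
      Ideal.span {(X 2 : MvPolynomial (Fin 4) k), X 3} :=
    ⟨Ideal.mul_mem_right _ _ (Ideal.subset_span hf1mem),
     Ideal.mul_mem_left _ _ (Ideal.subset_span hf2mem)⟩
  have hz := hker hmem
  rw [RingHom.mem_ker, map_mul] at hz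
  exact (mul_ne_zero hf1 hf2) hz
end
end

section
/- Let x_0,…,x_5 ∈ k and set f = x_0s²u + x_1stu + x_2t²u + x_3s²v + x_4stv + x_5t²v ∈ R_{(2,1)}. Then f factors as f = q·l for some bihomogeneous q of bidegree (1,1) and some bihomogeneous l of bidegree (1,0) if and only if x_2²x_3² − x_1x_2x_3x_4 + x_0x_2x_4² + x_1²x_3x_5 − 2x_0x_2x_3x_5 − x_0x_1x_4x_5 + x_0²x_5² = 0. -/
open MvPolynomial

noncomputable section

namespace Statement18Aux

open Finsupp

lemma apply_ne {i : Fin 4} {m n : Fin 4 →₀ ℕ} (h : m i ≠ n i) : m ≠ n := fun e => h (e ▸ rfl)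

lemma XX {k : Type*} [CommRing k] (i j : Fin 4) :
    (X i * X j : MvPolynomial (Fin 4) k) = monomial (single i 1 + single j 1) 1 := by
  rw [X, X, monomial_mul, one_mul]

lemma CXX {k : Type*} [CommRing k] (i j : Fin 4) (c : k) :
    C c * (X i * X j) = monomial (single i 1 + single j 1) c := by
  rw [XX, C_mul_monomial, mul_one]

lemma monomial_mem {k : Type*} [CommRing k] {c : k} {d : Fin 4 →₀ ℕ} {m n : ℕ}
    (h1 : d 0 + d 1 = m) (h2 : d 2 + d 3 = n) : monomial d c ∈ biDeg k m n := by
  intro e he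
  have := MvPolynomial.support_monomial_subset he
  rcases Finset.mem_singleton.mp this with rfl
  exact ⟨h1, h2⟩

lemma CXX_mem {k : Type*} [CommRing k] {i j : Fin 4} (hi : i = 0 ∨ i = 1)
    (hj : j = 2 ∨ j = 3) (c : k) : C c * (X i * X j) ∈ biDeg k 1 1 := by
  rw [CXX]
  rcases hi with rfl | rfl <;> rcases hj with rfl | rfl <;>
    exact monomial_mem (by simp) (by simp)

lemma mem10 {k : Type*} [CommRing k] {l : MvPolynomial (Fin 4) k} (hl : l ∈ biDeg k 1 0) :
    ∃ b₀ b₁ : k, l = C b₀ * X 0 + C b₁ * X 1 := by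
  refine ⟨coeff (single 0 1) l, coeff (single 1 1) l, ?_⟩
  have hX : ∀ (i : Fin 4) (c : k), C c * X i = monomial (single i 1) c := by
    intro i c; rw [X, C_mul_monomial, mul_one]
  rw [hX, hX]
  ext d
  rw [coeff_add, coeff_monomial, coeff_monomial]
  by_cases hd : d ∈ l.support
  · obtain ⟨h1, h2⟩ := hl d hd
    have hdx : d = single 0 (d 0) + single 1 (d 1) + single 2 (d 2) + single 3 (d 3) := by
      ext i; fin_cases i <;> simp
    have hcase : (d 0 = 1 ∧ d 1 = 0) ∨ (d 0 = 0 ∧ d 1 = 1) := by omega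
    have h2' : d 2 = 0 := by omega
    have h3' : d 3 = 0 := by omega
    rcases hcase with ⟨e0, e1⟩ | ⟨e0, e1⟩ <;>
      rw [e0, e1, h2', h3'] at hdx <;> simp only [single_zero, add_zero, zero_add] at hdx <;>
      subst hdx
    · rw [if_pos rfl, if_neg (apply_ne (i := 0) (by simp))]; ring
    · rw [if_neg (apply_ne (i := 0) (by simp)), if_pos rfl]; ring
  · have h0 : coeff d l = 0 := MvPolynomial.notMem_support_iff.mp hd
    rw [h0]
    have key : ∀ m : Fin 4 →₀ ℕ, (if m = d then coeff m l else 0) = 0 := by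
      intro m
      split_ifs with hm
      · rw [hm]; exact h0
      · rfl
    rw [key, key, add_zero]

lemma mem11 {k : Type*} [CommRing k] {q : MvPolynomial (Fin 4) k} (hq : q ∈ biDeg k 1 1) :
    ∃ a₀ a₁ a₂ a₃ : k, q = C a₀ * (X 0 * X 2) + C a₁ * (X 0 * X 3) +
      C a₂ * (X 1 * X 2) + C a₃ * (X 1 * X 3) := by
  refine ⟨coeff (single 0 1 + single 2 1) q, coeff (single 0 1 + single 3 1) q,
    coeff (single 1 1 + single 2 1) q, coeff (single 1 1 + single 3 1) q, ?_⟩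
  rw [CXX, CXX, CXX, CXX]
  ext d
  rw [coeff_add, coeff_add, coeff_add, coeff_monomial, coeff_monomial, coeff_monomial,
    coeff_monomial]
  by_cases hd : d ∈ q.support
  · obtain ⟨h1, h2⟩ := hq d hd
    have hdx : d = single 0 (d 0) + single 1 (d 1) + single 2 (d 2) + single 3 (d 3) := by
      ext i; fin_cases i <;> simp
    have hc1 : (d 0 = 1 ∧ d 1 = 0) ∨ (d 0 = 0 ∧ d 1 = 1) := by omega
    have hc2 : (d 2 = 1 ∧ d 3 = 0) ∨ (d 2 = 0 ∧ d 3 = 1) := by omega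
    rcases hc1 with ⟨e0, e1⟩ | ⟨e0, e1⟩ <;> rcases hc2 with ⟨e2, e3⟩ | ⟨e2, e3⟩ <;>
        rw [e0, e1, e2, e3] at hdx <;>
        simp only [single_zero, add_zero, zero_add] at hdx <;> subst hdx
    · rw [if_pos rfl, if_neg (apply_ne (i := 2) (by simp)),
        if_neg (apply_ne (i := 0) (by simp)), if_neg (apply_ne (i := 0) (by simp))]
      ring
    · rw [if_neg (apply_ne (i := 2) (by simp)), if_pos rfl,
        if_neg (apply_ne (i := 0) (by simp)), if_neg (apply_ne (i := 0) (by simp))]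
      ring
    · rw [if_neg (apply_ne (i := 0) (by simp)), if_neg (apply_ne (i := 0) (by simp)),
        if_pos rfl, if_neg (apply_ne (i := 2) (by simp))]
      ring
    · rw [if_neg (apply_ne (i := 0) (by simp)), if_neg (apply_ne (i := 0) (by simp)),
        if_neg (apply_ne (i := 2) (by simp)), if_pos rfl]
      ring
  · have h0 : coeff d q = 0 := MvPolynomial.notMem_support_iff.mp hd
    rw [h0]
    have key : ∀ m : Fin 4 →₀ ℕ, (if m = d then coeff m q else 0) = 0 := by
      intro m
      split_ifs with hm
      · rw [hm]; exact h0
      · rfl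
    rw [key, key, key, key]; ring

/-- if the two quadratics have a common root, f factors -/
lemma factor_of_common_root {k : Type*} [Field k] (x₀ x₁ x₂ x₃ x₄ x₅ α : k)
    (h1 : x₀ * α ^ 2 - x₁ * α + x₂ = 0) (h2 : x₃ * α ^ 2 - x₄ * α + x₅ = 0) :
    ∃ q l : MvPolynomial (Fin 4) k, q ∈ biDeg k 1 1 ∧ l ∈ biDeg k 1 0 ∧
      C x₀ * (X 0 ^ 2 * X 2) + C x₁ * (X 0 * X 1 * X 2) + C x₂ * (X 1 ^ 2 * X 2) +
        C x₃ * (X 0 ^ 2 * X 3) + C x₄ * (X 0 * X 1 * X 3) + C x₅ * (X 1 ^ 2 * X 3) =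
      q * l := by
  refine ⟨C x₀ * (X 0 * X 2) + C (x₁ - x₀ * α) * (X 1 * X 2) + C x₃ * (X 0 * X 3) +
      C (x₄ - x₃ * α) * (X 1 * X 3), X 0 + C α * X 1, ?_, ?_, ?_⟩
  · exact Submodule.add_mem _ (Submodule.add_mem _ (Submodule.add_mem _
      (CXX_mem (Or.inl rfl) (Or.inl rfl) _) (CXX_mem (Or.inr rfl) (Or.inl rfl) _))
      (CXX_mem (Or.inl rfl) (Or.inr rfl) _)) (CXX_mem (Or.inr rfl) (Or.inr rfl) _)
  · have m0 : (X 0 : MvPolynomial (Fin 4) k) ∈ biDeg k 1 0 := by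
      rw [X]; exact monomial_mem (by simp) (by simp)
    have m1 : (X 1 : MvPolynomial (Fin 4) k) ∈ biDeg k 1 0 := by
      rw [X]; exact monomial_mem (by simp) (by simp)
    rw [← smul_eq_C_mul]
    exact Submodule.add_mem _ m0 (Submodule.smul_mem _ α m1)
  · have c1 : (C x₀ : MvPolynomial (Fin 4) k) * C α ^ 2 - C x₁ * C α + C x₂ = 0 := by
      have := congrArg (fun a : k => (C a : MvPolynomial (Fin 4) k)) h1
      simpa only [map_sub, map_add, map_mul, map_pow, map_zero] using this
    have c2 : (C x₃ : MvPolynomial (Fin 4) k) * C α ^ 2 - C x₄ * C α + C x₅ = 0 := by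
      have := congrArg (fun a : k => (C a : MvPolynomial (Fin 4) k)) h2
      simpa only [map_sub, map_add, map_mul, map_pow, map_zero] using this
    simp only [C_sub, C_mul]
    linear_combination (X 1 ^ 2 * X 2 : MvPolynomial (Fin 4) k) * c1 +
      (X 1 ^ 2 * X 3 : MvPolynomial (Fin 4) k) * c2

/-- root extraction when x₀ ≠ 0 and the resultant vanishes -/
lemma common_root_of_res {k : Type*} [Field k] [IsAlgClosed k] (x₀ x₁ x₂ x₃ x₄ x₅ : k)
    (hx0 : x₀ ≠ 0)
    (hres : x₂ ^ 2 * x₃ ^ 2 - x₁ * x₂ * x₃ * x₄ + x₀ * x₂ * x₄ ^ 2 + x₁ ^ 2 * x₃ * x₅ -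
      2 * x₀ * x₂ * x₃ * x₅ - x₀ * x₁ * x₄ * x₅ + x₀ ^ 2 * x₅ ^ 2 = 0) :
    ∃ α : k, x₀ * α ^ 2 - x₁ * α + x₂ = 0 ∧ x₃ * α ^ 2 - x₄ * α + x₅ = 0 := by
  obtain ⟨α, hα⟩ := IsAlgClosed.exists_root
    (Polynomial.C x₀ * Polynomial.X ^ 2 + Polynomial.C (-x₁) * Polynomial.X + Polynomial.C x₂)
    (by rw [Polynomial.degree_quadratic hx0]; exact (by decide))
  have h1 : x₀ * α ^ 2 - x₁ * α + x₂ = 0 := by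
    have := hα
    simp only [Polynomial.IsRoot, Polynomial.eval_add, Polynomial.eval_mul,
      Polynomial.eval_pow, Polynomial.eval_C, Polynomial.eval_X] at this
    linear_combination this
  have key : (x₃ * α ^ 2 - x₄ * α + x₅) *
      (x₃ * (x₁ - x₀ * α) ^ 2 - x₀ * x₄ * (x₁ - x₀ * α) + x₀ ^ 2 * x₅) = 0 := by
    linear_combination hres - (x₃ ^ 2 * (x₂ + x₁ * α - x₀ * α ^ 2) - x₁ * x₃ * x₄ +
      x₀ * x₄ ^ 2 - 2 * x₀ * x₃ * x₅) * h1
  rcases mul_eq_zero.mp key with hP | hQ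
  · exact ⟨α, h1, hP⟩
  · set γ := (x₁ - x₀ * α) / x₀ with hγ
    have hg : x₀ * γ = x₁ - x₀ * α := by rw [hγ]; field_simp
    have hma : x₀ * (x₀ * γ ^ 2 - x₁ * γ + x₂) = 0 := by
      linear_combination (x₀ * γ + x₁ - x₀ * α - x₁) * hg + x₀ * h1
    have hmb : x₀ ^ 2 * (x₃ * γ ^ 2 - x₄ * γ + x₅) = 0 := by
      linear_combination (x₃ * (x₀ * γ + x₁ - x₀ * α) - x₀ * x₄) * hg + hQ
    refine ⟨γ, ?_, ?_⟩
    · rcases mul_eq_zero.mp hma with h | h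
      · exact absurd h hx0
      · exact h
    · rcases mul_eq_zero.mp hmb with h | h
      · exact absurd (pow_eq_zero_iff (by norm_num) |>.mp h) hx0
      · exact h

end Statement18Aux

/-- f = x₀s²u + x₁stu + x₂t²u + x₃s²v + x₄stv + x₅t²v factors as a
product of a bidegree (1,1) form and a bidegree (1,0) form iff
x₂²x₃² − x₁x₂x₃x₄ + x₀x₂x₄² + x₁²x₃x₅ − 2x₀x₂x₃x₅ − x₀x₁x₄x₅ + x₀²x₅² = 0. -/
theorem statement18 {k : Type*} [Field k] [IsAlgClosed k]
    (x₀ x₁ x₂ x₃ x₄ x₅ : k) :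
    (∃ q l : MvPolynomial (Fin 4) k, q ∈ biDeg k 1 1 ∧ l ∈ biDeg k 1 0 ∧
      C x₀ * (X 0 ^ 2 * X 2) + C x₁ * (X 0 * X 1 * X 2) + C x₂ * (X 1 ^ 2 * X 2) +
        C x₃ * (X 0 ^ 2 * X 3) + C x₄ * (X 0 * X 1 * X 3) + C x₅ * (X 1 ^ 2 * X 3) =
      q * l) ↔
    x₂ ^ 2 * x₃ ^ 2 - x₁ * x₂ * x₃ * x₄ + x₀ * x₂ * x₄ ^ 2 + x₁ ^ 2 * x₃ * x₅ -
      2 * x₀ * x₂ * x₃ * x₅ - x₀ * x₁ * x₄ * x₅ + x₀ ^ 2 * x₅ ^ 2 = 0 := by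
  constructor
  · rintro ⟨q, l, hq, hl, hEq⟩
    obtain ⟨a₀, a₁, a₂, a₃, rfl⟩ := Statement18Aux.mem11 hq
    obtain ⟨b₀, b₁, rfl⟩ := Statement18Aux.mem10 hl
    have e1 := congrArg (eval ![(1 : k), 0, 1, 0]) hEq
    have e2 := congrArg (eval ![(0 : k), 1, 1, 0]) hEq
    have e3 := congrArg (eval ![(1 : k), 0, 0, 1]) hEq
    have e4 := congrArg (eval ![(0 : k), 1, 0, 1]) hEq
    have e5 := congrArg (eval ![(1 : k), 1, 1, 0]) hEq
    have e6 := congrArg (eval ![(1 : k), 1, 0, 1]) hEq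
    simp at e1 e2 e3 e4 e5 e6
    have h0 : x₀ = a₀ * b₀ := by linear_combination e1
    have h2 : x₂ = a₂ * b₁ := by linear_combination e2
    have h3 : x₃ = a₁ * b₀ := by linear_combination e3
    have h5 : x₅ = a₃ * b₁ := by linear_combination e4
    have h1 : x₁ = a₀ * b₁ + a₂ * b₀ := by linear_combination e5 - e1 - e2
    have h4 : x₄ = a₁ * b₁ + a₃ * b₀ := by linear_combination e6 - e3 - e4
    subst h0 h1 h2 h3 h4 h5
    ring
  · intro hres
    by_cases hx0 : x₀ ≠ 0
    · obtain ⟨α, h1, h2⟩ := Statement18Aux.common_root_of_res x₀ x₁ x₂ x₃ x₄ x₅ hx0 hres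
      exact Statement18Aux.factor_of_common_root x₀ x₁ x₂ x₃ x₄ x₅ α h1 h2
    push_neg at hx0
    subst hx0
    by_cases hx3 : x₃ ≠ 0
    · obtain ⟨α, h1, h2⟩ := Statement18Aux.common_root_of_res x₃ x₄ x₅ 0 x₁ x₂ hx3 (by linear_combination hres)
      exact Statement18Aux.factor_of_common_root 0 x₁ x₂ x₃ x₄ x₅ α h2 h1
    push_neg at hx3
    subst hx3
    refine ⟨C x₁ * (X 0 * X 2) + C x₂ * (X 1 * X 2) + C x₄ * (X 0 * X 3) + C x₅ * (X 1 * X 3),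
      X 1, ?_, ?_, ?_⟩
    · exact Submodule.add_mem _ (Submodule.add_mem _ (Submodule.add_mem _
        (Statement18Aux.CXX_mem (Or.inl rfl) (Or.inl rfl) _) (Statement18Aux.CXX_mem (Or.inr rfl) (Or.inl rfl) _))
        (Statement18Aux.CXX_mem (Or.inl rfl) (Or.inr rfl) _)) (Statement18Aux.CXX_mem (Or.inr rfl) (Or.inr rfl) _)
    · intro d hd
      rw [X] at hd
      have := MvPolynomial.support_monomial_subset hd
      rcases Finset.mem_singleton.mp this with rfl
      constructor <;> simp
    · rw [C_0]
      ring
end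
end
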